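/- For nonnegative reals x, y and the dyadic partition points θ ∈ Pₙ := { lπ/2^{n+1} : l ∈ {1,...,2ⁿ} }, the sequence σₙ := max over θ ∈ Pₙ of (x·cos θ + y·sin θ) is monotone increasing in n and converges to √(x² + y²), with the error bound √(x²+y²) − σₙ ≤ (π/2^{n+1})·(x + y). -/

import Mathlib

private lemma sin_lip_aux (a b : ℝ) : |Real.sin a - Real.sin b| ≤ |a - b| := by
  rw [Real.sin_sub_sin, abs_mul, abs_mul]
  have h1 : |Real.sin ((a - b) / 2)| ≤ |(a - b) / 2| := Real.abs_sin_le_abs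
  have h2 : |Real.cos ((a + b) / 2)| ≤ 1 := Real.abs_cos_le_one _
  have h3 : |(a - b) / 2| = |a - b| / 2 := by rw [abs_div]; norm_num
  have h4 : |(2:ℝ)| = 2 := by norm_num
  rw [h3] at h1
  rw [h4]
  nlinarith [mul_le_mul h1 h2 (abs_nonneg _) (by positivity : (0:ℝ) ≤ |a - b| / 2),
    abs_nonneg (Real.sin ((a - b) / 2)), abs_nonneg (Real.cos ((a + b) / 2))]

private lemma cos_lip_aux (a b : ℝ) : |Real.cos a - Real.cos b| ≤ |a - b| := by
  rw [Real.cos_sub_cos, abs_mul, abs_mul, abs_neg]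
  have h1 : |Real.sin ((a - b) / 2)| ≤ |(a - b) / 2| := Real.abs_sin_le_abs
  have h2 : |Real.sin ((a + b) / 2)| ≤ 1 := Real.abs_sin_le_one _
  have h3 : |(a - b) / 2| = |a - b| / 2 := by rw [abs_div]; norm_num
  have h4 : |(2:ℝ)| = 2 := by norm_num
  rw [h3] at h1
  rw [h4]
  nlinarith [mul_le_mul h2 h1 (abs_nonneg _) (by norm_num : (0:ℝ) ≤ 1),
    abs_nonneg (Real.sin ((a - b) / 2)), abs_nonneg (Real.sin ((a + b) / 2))]

open Real in
theorem stmt_19 (x y : ℝ) (hx : 0 ≤ x) (hy : 0 ≤ y) (σ : ℕ → ℝ)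
    (hσ : ∀ n, σ n = sSup {z : ℝ | ∃ l : ℕ, 1 ≤ l ∧ l ≤ 2 ^ n ∧
      z = x * cos (l * π / 2 ^ (n + 1)) + y * sin (l * π / 2 ^ (n + 1))}) :
    Monotone σ ∧
    Filter.Tendsto σ Filter.atTop (nhds (Real.sqrt (x ^ 2 + y ^ 2))) ∧
    ∀ n, Real.sqrt (x ^ 2 + y ^ 2) - σ n ≤ (π / 2 ^ (n + 1)) * (x + y) := by
  have hπ := Real.pi_pos
  set r := Real.sqrt (x ^ 2 + y ^ 2) with hr
  have hr0 : 0 ≤ r := Real.sqrt_nonneg _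
  have hrsq : r ^ 2 = x ^ 2 + y ^ 2 := Real.sq_sqrt (by positivity)
  set S : ℕ → Set ℝ := fun n => {z : ℝ | ∃ l : ℕ, 1 ≤ l ∧ l ≤ 2 ^ n ∧
      z = x * cos (l * π / 2 ^ (n + 1)) + y * sin (l * π / 2 ^ (n + 1))} with hS
  have hσ' : ∀ n, σ n = sSup (S n) := hσ
  have hne : ∀ n, (S n).Nonempty := fun n =>
    ⟨_, 1, le_refl _, Nat.one_le_two_pow, rfl⟩
  have hub : ∀ n, ∀ z ∈ S n, z ≤ r := by
    rintro n z ⟨l, -, -, rfl⟩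
    set θ := (l : ℝ) * π / 2 ^ (n + 1)
    have h1 := Real.sin_sq_add_cos_sq θ
    rcases le_or_gt (x * cos θ + y * sin θ) 0 with hz | hz
    · exact hz.trans hr0
    · have : (x * cos θ + y * sin θ) ^ 2 ≤ r ^ 2 := by
        rw [hrsq]; nlinarith [sq_nonneg (x * sin θ - y * cos θ)]
      nlinarith
  have hbdd : ∀ n, BddAbove (S n) := fun n => ⟨r, hub n⟩
  -- the angle φ
  set φ := Real.arccos (x / r) with hφdef
  have hφ0 : 0 ≤ φ := Real.arccos_nonneg _
  have hφ2 : φ ≤ π / 2 := by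
    rw [hφdef, Real.arccos_le_pi_div_two]
    positivity
  have hkey : x * cos φ + y * sin φ = r := by
    rcases eq_or_lt_of_le hr0 with h0 | hpos
    · have hx0 : x = 0 := by nlinarith [Real.sq_sqrt (show (0:ℝ) ≤ x^2+y^2 by positivity), sq_nonneg x, sq_nonneg y]
      have hy0 : y = 0 := by nlinarith [Real.sq_sqrt (show (0:ℝ) ≤ x^2+y^2 by positivity), sq_nonneg x, sq_nonneg y]
      simp [hx0, hy0, ← h0]
    · have hxr : x / r ≤ 1 := by
        rw [div_le_one hpos]
        nlinarith [sq_nonneg y]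
      have hxr' : -1 ≤ x / r := le_trans (by norm_num) (div_nonneg hx hpos.le)
      have hcos : cos φ = x / r := Real.cos_arccos hxr' hxr
      have hsin : sin φ = y / r := by
        rw [hφdef, Real.sin_arccos]
        have h1 : 1 - (x / r) ^ 2 = (y / r) ^ 2 := by
          field_simp
          nlinarith
        rw [h1, Real.sqrt_sq (by positivity)]
      rw [hcos, hsin]
      field_simp
      nlinarith
  -- error bound
  have herr : ∀ n, r - σ n ≤ (π / 2 ^ (n + 1)) * (x + y) := by
    intro n
    rw [hσ' n]
    set h := π / 2 ^ (n + 1) with hh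
    have hhpos : 0 < h := by positivity
    have h2n : (2:ℝ) ^ (n+1) = 2 * 2 ^ n := by ring
    have hφle : φ ≤ 2 ^ n * h := by
      rw [hh, h2n]
      have : (2:ℝ) ^ n * (π / (2 * 2 ^ n)) = π / 2 := by
        field_simp
      rw [this]; exact hφ2
    set l : ℕ := max 1 ⌊φ / h⌋₊ with hl
    have hl1 : 1 ≤ l := le_max_left _ _
    have hl2 : l ≤ 2 ^ n := by
      refine max_le Nat.one_le_two_pow ?_
      have : φ / h ≤ ((2 ^ n : ℕ) : ℝ) := by
        rw [div_le_iff₀ hhpos]; push_cast; linarith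
      have h' := Nat.floor_le_floor this
      rwa [Nat.floor_natCast] at h'
    have hdist : |(l : ℝ) * h - φ| ≤ h := by
      rcases Nat.eq_zero_or_pos ⌊φ / h⌋₊ with h0 | hposf
      · have hl' : l = 1 := by simp [hl, h0]
        have : φ / h < 1 := by
          have := Nat.floor_eq_zero.mp h0
          exact_mod_cast this
        have hφh : φ < h := (div_lt_one hhpos).mp this
        rw [hl']
        rw [abs_le]
        constructor <;> push_cast <;> linarith
      · have hl' : l = ⌊φ / h⌋₊ := max_eq_right hposf
        have hfl : ((⌊φ / h⌋₊ : ℕ) : ℝ) ≤ φ / h := Nat.floor_le (by positivity)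
        have hfu : φ / h < ⌊φ / h⌋₊ + 1 := Nat.lt_floor_add_one _
        have h1 : (l : ℝ) * h ≤ φ := by
          rw [hl']
          calc ((⌊φ / h⌋₊ : ℕ) : ℝ) * h ≤ (φ / h) * h := by
                exact mul_le_mul_of_nonneg_right hfl hhpos.le
            _ = φ := by field_simp
        have h2 : φ < ((l : ℝ) + 1) * h := by
          rw [hl']
          have := mul_lt_mul_of_pos_right hfu hhpos
          calc φ = (φ / h) * h := by field_simp
            _ < (((⌊φ / h⌋₊ : ℕ) : ℝ) + 1) * h := this
        rw [abs_le]
        constructor <;> linarith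
    -- the grid point
    have hmem : x * cos ((l:ℝ) * π / 2 ^ (n + 1)) + y * sin ((l:ℝ) * π / 2 ^ (n + 1)) ∈ S n :=
      ⟨l, hl1, hl2, rfl⟩
    have hangle : (l : ℝ) * π / 2 ^ (n + 1) = (l : ℝ) * h := by
      rw [hh]; ring
    have hc : cos φ - cos ((l:ℝ) * h) ≤ h := by
      have hlip := cos_lip_aux ((l:ℝ) * h) φ
      calc cos φ - cos ((l:ℝ) * h) ≤ |cos φ - cos ((l:ℝ) * h)| := le_abs_self _
        _ = |cos ((l:ℝ) * h) - cos φ| := abs_sub_comm _ _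
        _ ≤ |(l:ℝ) * h - φ| := hlip
        _ ≤ h := hdist
    have hs : sin φ - sin ((l:ℝ) * h) ≤ h := by
      have hlip := sin_lip_aux ((l:ℝ) * h) φ
      calc sin φ - sin ((l:ℝ) * h) ≤ |sin φ - sin ((l:ℝ) * h)| := le_abs_self _
        _ = |sin ((l:ℝ) * h) - sin φ| := abs_sub_comm _ _
        _ ≤ |(l:ℝ) * h - φ| := hlip
        _ ≤ h := hdist
    have hlow : r - (x + y) * h ≤ x * cos ((l:ℝ) * h) + y * sin ((l:ℝ) * h) := by
      have h1 : x * (cos φ - cos ((l:ℝ) * h)) ≤ x * h := mul_le_mul_of_nonneg_left hc hx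
      have h2 : y * (sin φ - sin ((l:ℝ) * h)) ≤ y * h := mul_le_mul_of_nonneg_left hs hy
      linarith [hkey, h1, h2]
    have hle : x * cos ((l:ℝ) * h) + y * sin ((l:ℝ) * h) ≤ sSup (S n) := by
      rw [← hangle]
      exact le_csSup (hbdd n) hmem
    linarith
  -- monotone
  have hmono : Monotone σ := by
    apply monotone_nat_of_le_succ
    intro n
    rw [hσ' n, hσ' (n+1)]
    apply csSup_le_csSup (hbdd (n+1)) (hne n)
    rintro z ⟨l, hl1, hl2, rfl⟩
    refine ⟨2 * l, by omega, by calc 2*l ≤ 2*2^n := by omega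
      _ = 2^(n+1) := (pow_succ' 2 n).symm, ?_⟩
    have : ((2 * l : ℕ) : ℝ) * π / 2 ^ (n + 1 + 1) = (l : ℝ) * π / 2 ^ (n + 1) := by
      push_cast; ring
    rw [this]
  refine ⟨hmono, ?_, herr⟩
  -- convergence
  have hub' : ∀ n, σ n ≤ r := fun n => by
    rw [hσ' n]; exact csSup_le (hne n) (hub n)
  have hlb : ∀ n, r - (π / 2 ^ (n + 1)) * (x + y) ≤ σ n := fun n => by
    have := herr n; linarith
  have h2 : Filter.Tendsto (fun n : ℕ => (π / 2 ^ (n + 1)) * (x + y)) Filter.atTop (nhds 0) := by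
    have heq : ∀ n : ℕ, (π / 2 ^ (n + 1)) * (x + y) = (π * (x + y) / 2) * (1/2 : ℝ) ^ n := by
      intro n
      have h2n : ((1:ℝ)/2)^n = ((2:ℝ)^n)⁻¹ := by rw [one_div, inv_pow]
      have hne2 : ((2:ℝ)^n) ≠ 0 := by positivity
      rw [h2n, pow_succ]
      field_simp
    simp only [heq]
    have hpow : Filter.Tendsto (fun n : ℕ => (1/2 : ℝ) ^ n) Filter.atTop (nhds 0) :=
      tendsto_pow_atTop_nhds_zero_of_lt_one (by norm_num) (by norm_num)
    simpa using hpow.const_mul (π * (x + y) / 2)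
  have hlowtend : Filter.Tendsto (fun n : ℕ => r - (π / 2 ^ (n + 1)) * (x + y)) Filter.atTop (nhds r) := by
    have := h2.const_sub r
    rwa [sub_zero] at this
  exact tendsto_of_tendsto_of_tendsto_of_le_of_le hlowtend tendsto_const_nhds hlb hub'
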